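/- For a subspace G of the feature space with binary Y, the maximum of H(f) over f ∈ G is attained at f = Π_G f*, and equals H(G) = (ρ²/2)‖Π_G f*‖². -/

import Mathlib

open Finset

/-- H-score of a one-dimensional feature `f : X → ℝ` under the binary model
with prior `(pY1, pYm1)` on `Y ∈ {1, -1}`, conditionals
`P_{X|Y=y}(x) = pX x (1 + ρ fs x g*(y))`:
`H(f) = (1/2) E_Y[(E[f̃(X)|Y])²] / E[f(X)²]`. -/
noncomputable def Hscore1 {X : Type*} [Fintype X] (pX : X → ℝ)
    (pY1 pYm1 gs1 gsm1 ρ : ℝ) (fs : X → ℝ) (f : X → ℝ) : ℝ :=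
  (1 / 2) *
    (pY1 * (∑ x, pX x * (1 + ρ * fs x * gs1) * (f x - ∑ x', pX x' * f x')) ^ 2
      + pYm1 * (∑ x, pX x * (1 + ρ * fs x * gsm1) * (f x - ∑ x', pX x' * f x')) ^ 2)
    / (∑ x, pX x * f x ^ 2)


lemma Hscore1_eq {X : Type*} [Fintype X]
    (pX : X → ℝ) (hpX1 : ∑ x, pX x = 1)
    (pY1 pYm1 : ℝ)
    (fs : X → ℝ) (hfm : ∑ x, pX x * fs x = 0)
    (gs1 gsm1 : ℝ)
    (hgv : pY1 * gs1 ^ 2 + pYm1 * gsm1 ^ 2 = 1)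
    (ρ : ℝ) (f : X → ℝ) :
    Hscore1 pX pY1 pYm1 gs1 gsm1 ρ fs f
      = ρ ^ 2 / 2 * (∑ x, pX x * fs x * f x) ^ 2 / (∑ x, pX x * f x ^ 2) := by
  have key : ∀ g : ℝ, ∑ x, pX x * (1 + ρ * fs x * g) * (f x - ∑ x', pX x' * f x')
      = ρ * g * ∑ x, pX x * fs x * f x := by
    intro g
    have e : ∀ x, pX x * (1 + ρ * fs x * g) * (f x - ∑ x', pX x' * f x')
        = pX x * f x - (∑ x', pX x' * f x') * pX x
          + ρ * g * (pX x * fs x * f x) - (ρ * g * (∑ x', pX x' * f x')) * (pX x * fs x) := by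
      intro x; ring
    simp only [e, Finset.sum_sub_distrib, Finset.sum_add_distrib, ← Finset.mul_sum,
      hpX1, hfm, mul_zero, mul_one, sub_zero, sub_self, zero_add]
  unfold Hscore1
  rw [key, key]
  rw [show (1 / 2) * (pY1 * (ρ * gs1 * ∑ x, pX x * fs x * f x) ^ 2
      + pYm1 * (ρ * gsm1 * ∑ x, pX x * fs x * f x) ^ 2)
      = ρ ^ 2 / 2 * (∑ x, pX x * fs x * f x) ^ 2 * (pY1 * gs1 ^ 2 + pYm1 * gsm1 ^ 2) from by ring,
    hgv, mul_one]

/-- For a subspace `G` of the feature space (binary `Y`, modal decomposition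
`P_{X,Y} = P_X P_Y (1 + ρ f* g*)`), the maximum of the H-score `H(f)` over
`f ∈ G` is attained at `f = Π_G f*` (the projection `h` of `f*` onto `G`), and
equals `H(G) = (ρ²/2)‖Π_G f*‖²`. -/
theorem stmt6 {X : Type*} [Fintype X]
    (pX : X → ℝ) (hpX : ∀ x, 0 < pX x) (hpX1 : ∑ x, pX x = 1)
    (pY1 pYm1 : ℝ) (hpY : 0 ≤ pY1 ∧ 0 ≤ pYm1) (hpY1 : pY1 + pYm1 = 1)
    (fs : X → ℝ) (hfm : ∑ x, pX x * fs x = 0) (hfv : ∑ x, pX x * fs x ^ 2 = 1)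
    (gs1 gsm1 : ℝ) (hgm : pY1 * gs1 + pYm1 * gsm1 = 0)
    (hgv : pY1 * gs1 ^ 2 + pYm1 * gsm1 ^ 2 = 1)
    (ρ : ℝ) (hρ : 0 < ρ)
    (G : Submodule ℝ (X → ℝ))
    (h : X → ℝ) (hmem : h ∈ G)
    (hperp : ∀ u ∈ G, ∑ x, pX x * (fs x - h x) * u x = 0) :
    (∀ f ∈ G, Hscore1 pX pY1 pYm1 gs1 gsm1 ρ fs f
        ≤ ρ ^ 2 / 2 * ∑ x, pX x * h x ^ 2) ∧
    Hscore1 pX pY1 pYm1 gs1 gsm1 ρ fs h = ρ ^ 2 / 2 * ∑ x, pX x * h x ^ 2 := by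
  have hHn : (0:ℝ) ≤ ∑ x, pX x * h x ^ 2 :=
    Finset.sum_nonneg fun x _ => mul_nonneg (hpX x).le (sq_nonneg _)
  have hc : ∀ f : X → ℝ, (∑ x, pX x * (fs x - h x) * f x = 0) →
      ∑ x, pX x * fs x * f x = ∑ x, pX x * h x * f x := by
    intro f hf
    have : ∑ x, (pX x * fs x * f x - pX x * h x * f x) = 0 := by
      rw [← hf]; exact Finset.sum_congr rfl fun x _ => by ring
    rw [Finset.sum_sub_distrib] at this
    linarith
  constructor
  · intro f hf
    rw [Hscore1_eq pX hpX1 pY1 pYm1 fs hfm gs1 gsm1 hgv ρ f, hc f (hperp f hf)]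
    rcases eq_or_lt_of_le (Finset.sum_nonneg fun x _ =>
        mul_nonneg (hpX x).le (sq_nonneg (f x)) : (0:ℝ) ≤ ∑ x, pX x * f x ^ 2) with hD | hD
    · rw [← hD, div_zero]
      positivity
    · rw [div_le_iff₀ hD]
      have cs := Finset.sum_mul_sq_le_sq_mul_sq Finset.univ
        (fun x => Real.sqrt (pX x) * h x) (fun x => Real.sqrt (pX x) * f x)
      have e1 : ∀ x : X, (Real.sqrt (pX x) * h x) * (Real.sqrt (pX x) * f x)
          = pX x * h x * f x := by
        intro x
        rw [show (Real.sqrt (pX x) * h x) * (Real.sqrt (pX x) * f x)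
          = (Real.sqrt (pX x) * Real.sqrt (pX x)) * (h x * f x) from by ring,
          Real.mul_self_sqrt (hpX x).le]; ring
      have e2 : ∀ (u : X → ℝ) (x : X), (Real.sqrt (pX x) * u x) ^ 2 = pX x * u x ^ 2 := by
        intro u x
        rw [mul_pow, Real.sq_sqrt (hpX x).le]
      simp_rw [e1, e2] at cs
      calc ρ ^ 2 / 2 * (∑ x, pX x * h x * f x) ^ 2
          ≤ ρ ^ 2 / 2 * ((∑ x, pX x * h x ^ 2) * ∑ x, pX x * f x ^ 2) := by
            apply mul_le_mul_of_nonneg_left cs (by positivity)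
        _ = ρ ^ 2 / 2 * (∑ x, pX x * h x ^ 2) * ∑ x, pX x * f x ^ 2 := by ring
  · rw [Hscore1_eq pX hpX1 pY1 pYm1 fs hfm gs1 gsm1 hgv ρ h, hc h (hperp h hmem)]
    have e : ∀ x : X, pX x * h x * h x = pX x * h x ^ 2 := fun x => by ring
    simp_rw [e]
    rcases eq_or_lt_of_le hHn with hD | hD
    · rw [← hD]; simp
    · field_simp
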